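/- Let f : [a,b] → ℝ be absolutely continuous on [a,b] with a.e. derivative f′. Then for every x ∈ [a,b], the quantity |∫_a^b f(t) dt − [(x−a)·f(a) + (b−x)·f(b)]| is bounded above by: (i) [ (1/4)(b−a)² + (x − (a+b)/2)² ] · ‖f′‖_∞ when f′ ∈ L^∞[a,b]; (ii) (q+1)^{−1/q} · [ (x−a)^{q+1} + (b−x)^{q+1} ]^{1/q} · ‖f′‖_p when f′ ∈ L^p[a,b] with p > 1 and 1/p + 1/q = 1; (iii) [ (1/2)(b−a) + |x − (a+b)/2| ] · ‖f′‖_1. -/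

import Mathlib

open MeasureTheory Set intervalIntegral

lemma fubini_step (a b : ℝ) (hab : a ≤ b) (f' : ℝ → ℝ)
    (hf'int : IntervalIntegrable f' volume a b) :
    (∫ t in a..b, (∫ s in a..t, f' s)) = ∫ s in a..b, (b - s) * f' s := by
  set μ := volume.restrict (Set.Ioc a b) with hμ
  haveI : IsFiniteMeasure μ := ⟨by
    rw [hμ, Measure.restrict_apply_univ, Real.volume_Ioc]; exact ENNReal.ofReal_lt_top⟩
  have hf'2 : IntegrableOn f' (Set.Ioc a b) volume := hf'int.1
  set F : ℝ → ℝ → ℝ := fun t s => if s ≤ t then f' s else 0 with hF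
  have hgm : AEStronglyMeasurable (fun p : ℝ × ℝ => f' p.2) (μ.prod μ) :=
    hf'2.aestronglyMeasurable.comp_snd
  have hD : MeasurableSet {p : ℝ × ℝ | p.2 ≤ p.1} :=
    measurableSet_le measurable_snd measurable_fst
  have hFeq : Function.uncurry F = {p : ℝ × ℝ | p.2 ≤ p.1}.indicator (fun p => f' p.2) := by
    funext p
    by_cases h : p.2 ≤ p.1 <;> simp [Function.uncurry, hF, h, Set.indicator_apply]
  have hInt : Integrable (Function.uncurry F) (μ.prod μ) := by
    rw [hFeq]
    refine (integrable_prod_iff (hgm.indicator hD)).2 ⟨?_, ?_⟩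
    · refine ae_of_all _ fun t => ?_
      have : (fun s => ({p : ℝ × ℝ | p.2 ≤ p.1}.indicator (fun p => f' p.2)) (t, s))
          = (Set.Iic t).indicator f' := by
        funext s
        by_cases h : s ≤ t <;> simp [Set.indicator_apply, h]
      rw [this]
      exact (hf'2.indicator measurableSet_Iic)
    · refine Integrable.mono' (integrable_const (∫ s, ‖f' s‖ ∂μ)) ?_ ?_
      · exact (hgm.indicator hD).norm.integral_prod_right'
      · refine ae_of_all _ fun t => ?_
        rw [Real.norm_eq_abs, abs_of_nonneg (by positivity)]
        refine integral_mono_of_nonneg (ae_of_all _ fun s => norm_nonneg _) hf'2.norm ?_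
        refine ae_of_all _ fun s => ?_
        by_cases h : s ≤ t <;> simp [Set.indicator_apply, h, norm_nonneg]
  have swap := integral_integral_swap hInt
  -- LHS
  have hL : (∫ t, (∫ s, F t s ∂μ) ∂μ) = ∫ t in a..b, (∫ s in a..t, f' s) := by
    rw [intervalIntegral.integral_of_le hab]
    refine integral_congr_ae ?_
    filter_upwards [ae_restrict_mem measurableSet_Ioc] with t ht
    have h1 : F t = (Set.Iic t).indicator f' := by
      funext s; by_cases h : s ≤ t <;> simp [hF, Set.indicator_apply, h]
    rw [h1, MeasureTheory.integral_indicator measurableSet_Iic, hμ,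
      Measure.restrict_restrict measurableSet_Iic]
    have h2 : Set.Iic t ∩ Set.Ioc a b = Set.Ioc a t := by
      ext s
      simp only [Set.mem_inter_iff, Set.mem_Iic, Set.mem_Ioc]
      exact ⟨fun ⟨h, h2, _⟩ => ⟨h2, h⟩, fun ⟨h2, h⟩ => ⟨h, h2, h.trans ht.2⟩⟩
    rw [h2, intervalIntegral.integral_of_le ht.1.le]
  have hR : (∫ s, (∫ t, F t s ∂μ) ∂μ) = ∫ s in a..b, (b - s) * f' s := by
    rw [intervalIntegral.integral_of_le hab]
    refine integral_congr_ae ?_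
    filter_upwards [ae_restrict_mem measurableSet_Ioc] with s hs
    have h1 : (fun t => F t s) = (Set.Ici s).indicator (fun _ => f' s) := by
      funext t; by_cases h : s ≤ t <;> simp [hF, Set.indicator_apply, h]
    rw [h1, MeasureTheory.integral_indicator measurableSet_Ici, hμ,
      Measure.restrict_restrict measurableSet_Ici]
    have h2 : Set.Ici s ∩ Set.Ioc a b = Set.Icc s b := by
      ext t
      simp only [Set.mem_inter_iff, Set.mem_Ici, Set.mem_Ioc, Set.mem_Icc]
      exact ⟨fun ⟨h, _, h3⟩ => ⟨h, h3⟩, fun ⟨h, h3⟩ => ⟨h, hs.1.trans_le h, h3⟩⟩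
    rw [h2, setIntegral_const, measureReal_def, Real.volume_Icc, smul_eq_mul,
      ENNReal.toReal_ofReal (by linarith [hs.2] : (0:ℝ) ≤ b - s)]
  rw [← hL, ← hR]
  exact swap

lemma trap_key (a b x : ℝ) (hab : a ≤ b) (f f' : ℝ → ℝ)
    (hf'int : IntervalIntegrable f' volume a b)
    (hf : ∀ y ∈ Set.Icc a b, f y = f a + ∫ t in a..y, f' t) :
    (∫ t in a..b, f t) - ((x - a) * f a + (b - x) * f b) = ∫ s in a..b, (x - s) * f' s := by
  have hG : ContinuousOn (fun t => ∫ s in a..t, f' s) (Set.uIcc a b) :=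
    intervalIntegral.continuousOn_primitive_interval' hf'int Set.left_mem_uIcc
  have hGint : IntervalIntegrable (fun t => ∫ s in a..t, f' s) volume a b :=
    hG.intervalIntegrable
  have step1 : (∫ t in a..b, f t) = (b - a) * f a + ∫ t in a..b, (∫ s in a..t, f' s) := by
    rw [intervalIntegral.integral_congr (g := fun t => f a + ∫ s in a..t, f' s)
      (fun t ht => hf t (by rwa [Set.uIcc_of_le hab] at ht)),
      intervalIntegral.integral_add (intervalIntegrable_const) hGint,
      intervalIntegral.integral_const, smul_eq_mul, mul_comm]
  have step2 := fubini_step a b hab f' hf'int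
  have hfb : f b = f a + ∫ t in a..b, f' t := hf b (Set.right_mem_Icc.2 hab)
  have hbs : IntervalIntegrable (fun s => (b - s) * f' s) volume a b :=
    hf'int.continuousOn_mul (by fun_prop)
  have step3 : (∫ s in a..b, (x - s) * f' s)
      = (∫ s in a..b, (b - s) * f' s) - (b - x) * ∫ s in a..b, f' s := by
    have h : ∀ s, (x - s) * f' s = (b - s) * f' s - (b - x) * f' s := fun s => by ring
    simp_rw [h]
    rw [intervalIntegral.integral_sub hbs (hf'int.const_mul _),
      intervalIntegral.integral_const_mul]
  rw [step1, step2, step3, hfb]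
  ring

lemma kernel_abs_integral (a b x : ℝ) (hx : x ∈ Set.Icc a b) :
    (∫ s in a..b, |x - s|) = (x - a)^2/2 + (b - x)^2/2 := by
  have i1 : IntervalIntegrable (fun s => |x - s|) volume a x :=
    Continuous.intervalIntegrable (by fun_prop) _ _
  have i2 : IntervalIntegrable (fun s => |x - s|) volume x b :=
    Continuous.intervalIntegrable (by fun_prop) _ _
  rw [← intervalIntegral.integral_add_adjacent_intervals i1 i2]
  have e1 : (∫ s in a..x, |x - s|) = ∫ s in a..x, (x - s) := by
    refine intervalIntegral.integral_congr fun s hs => ?_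
    rw [Set.uIcc_of_le hx.1] at hs
    exact abs_of_nonneg (by linarith [hs.2])
  have e2 : (∫ s in x..b, |x - s|) = ∫ s in x..b, (s - x) := by
    refine intervalIntegral.integral_congr fun s hs => ?_
    rw [Set.uIcc_of_le hx.2] at hs
    rw [abs_sub_comm]
    exact abs_of_nonneg (by linarith [hs.1])
  rw [e1, e2, intervalIntegral.integral_comp_sub_left (fun u => u) x,
    intervalIntegral.integral_comp_sub_right (fun u => u) x]
  simp [integral_id]

/-- **Generalised trapezoid inequality for absolutely continuous functions**, with bounds
in terms of the `L^∞`, `L^p` and `L^1` norms of the a.e. derivative `f'`.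
Absolute continuity is expressed through the fundamental theorem of calculus:
`f'` is integrable on `[a,b]` and `f x = f a + ∫_a^x f'` for all `x ∈ [a,b]`. -/
theorem generalised_trapezoid_absolutely_continuous
    (a b : ℝ) (hab : a < b) (f f' : ℝ → ℝ)
    (hf'int : IntervalIntegrable f' volume a b)
    (hf : ∀ y ∈ Set.Icc a b, f y = f a + ∫ t in a..y, f' t)
    (x : ℝ) (hx : x ∈ Set.Icc a b) :
    (MemLp f' ⊤ (volume.restrict (Set.Icc a b)) →
      |(∫ t in a..b, f t) - ((x - a) * f a + (b - x) * f b)| ≤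
        ((1 / 4) * (b - a) ^ 2 + (x - (a + b) / 2) ^ 2) *
          (eLpNorm f' ⊤ (volume.restrict (Set.Icc a b))).toReal) ∧
    (∀ p q : ℝ, 1 < p → 1 / p + 1 / q = 1 →
      MemLp f' (ENNReal.ofReal p) (volume.restrict (Set.Icc a b)) →
      |(∫ t in a..b, f t) - ((x - a) * f a + (b - x) * f b)| ≤
        (1 / (q + 1) ^ (1 / q)) * ((x - a) ^ (q + 1) + (b - x) ^ (q + 1)) ^ (1 / q) *
          (∫ s in a..b, |f' s| ^ p) ^ (1 / p)) ∧
    (|(∫ t in a..b, f t) - ((x - a) * f a + (b - x) * f b)| ≤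
      ((1 / 2) * (b - a) + |x - (a + b) / 2|) * ∫ s in a..b, |f' s|) := by
  obtain ⟨hax, hxb⟩ := hx
  have hab' : a ≤ b := hab.le
  set μ' := volume.restrict (Set.Icc a b) with hμ'
  haveI : IsFiniteMeasure μ' := ⟨by
    rw [hμ', Measure.restrict_apply_univ, Real.volume_Icc]; exact ENNReal.ofReal_lt_top⟩
  have hconv : ∀ g : ℝ → ℝ, (∫ s in a..b, g s) = ∫ s, g s ∂μ' := fun g => by
    rw [intervalIntegral.integral_of_le hab', hμ', integral_Icc_eq_integral_Ioc]
  have key := trap_key a b x hab' f f' hf'int hf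
  have hkerInt : IntervalIntegrable (fun s => |x - s| * |f' s|) volume a b :=
    hf'int.abs.continuousOn_mul (by fun_prop)
  have hkerIcc : Integrable (fun s => |x - s| * |f' s|) μ' := by
    rw [hμ']
    exact (integrableOn_Icc_iff_integrableOn_Ioc).2 hkerInt.1
  have hf'Icc : Integrable (fun s => |f' s|) μ' := by
    rw [hμ']
    exact (integrableOn_Icc_iff_integrableOn_Ioc).2 hf'int.abs.1
  have habs : |(∫ t in a..b, f t) - ((x - a) * f a + (b - x) * f b)|
      ≤ ∫ s in a..b, |x - s| * |f' s| := by
    rw [key]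
    calc |∫ s in a..b, (x - s) * f' s| ≤ ∫ s in a..b, |(x - s) * f' s| :=
          intervalIntegral.abs_integral_le_integral_abs hab'
      _ = ∫ s in a..b, |x - s| * |f' s| := by simp_rw [abs_mul]
  have hKval := kernel_abs_integral a b x ⟨hax, hxb⟩
  refine ⟨?_, ?_, ?_⟩
  · -- L∞ bound
    intro hm
    set M := (eLpNorm f' ⊤ μ').toReal with hM
    have hMnn : (0:ℝ) ≤ M := ENNReal.toReal_nonneg
    have hbd : ∀ᵐ s ∂μ', |f' s| ≤ M := by
      have hlt : eLpNormEssSup f' μ' ≠ ⊤ := by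
        rw [← eLpNorm_exponent_top]; exact hm.2.ne
      filter_upwards [ae_le_eLpNormEssSup (f := f') (μ := μ')] with s hs
      have h2 : ((‖f' s‖₊ : ENNReal)).toReal ≤ (eLpNormEssSup f' μ').toReal :=
        ENNReal.toReal_mono hlt hs
      simpa [hM, eLpNorm_exponent_top, Real.norm_eq_abs] using h2
    have h1 : (∫ s in a..b, |x - s| * |f' s|) ≤ (∫ s in a..b, |x - s|) * M := by
      rw [hconv (fun s => |x - s| * |f' s|), hconv (fun s => |x - s|),
        ← MeasureTheory.integral_mul_const]
      refine integral_mono_ae hkerIcc ?_ ?_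
      · rw [hμ']
        exact ((by fun_prop : Continuous fun s : ℝ => |x - s| * M)).integrableOn_Icc
      · filter_upwards [hbd] with s hs
        exact mul_le_mul_of_nonneg_left hs (abs_nonneg _)
    calc |(∫ t in a..b, f t) - ((x - a) * f a + (b - x) * f b)|
        ≤ ∫ s in a..b, |x - s| * |f' s| := habs
      _ ≤ (∫ s in a..b, |x - s|) * M := h1
      _ = ((1 / 4) * (b - a) ^ 2 + (x - (a + b) / 2) ^ 2) * M := by rw [hKval]; ring
  · -- Lp bound
    intro p q hp hpq hmp
    have hpq' : p.HolderConjugate q := Real.holderConjugate_iff.mpr ⟨hp, by rw [← one_div, ← one_div]; exact hpq⟩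
    have hq1 : 1 < q := hpq'.symm.lt
    have hq0 : (0:ℝ) < q := by linarith
    have hg : MemLp (fun s => |x - s|) (ENNReal.ofReal q) μ' := by
      refine MemLp.mono_exponent (q := ⊤) ?_ le_top
      refine memLp_top_of_bound
        ((by fun_prop : Continuous fun s : ℝ => |x - s|)).aestronglyMeasurable (b - a) ?_
      filter_upwards [ae_restrict_mem measurableSet_Icc] with s hs
      rw [Real.norm_eq_abs, abs_abs]
      rcases abs_cases (x - s) with ⟨e1, _⟩ | ⟨e1, _⟩ <;> rw [e1] <;>
        linarith [hs.1, hs.2]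
    have hfa : MemLp (fun s => |f' s|) (ENNReal.ofReal p) μ' := by
      simpa [Real.norm_eq_abs] using hmp.norm
    have hold := integral_mul_le_Lp_mul_Lq_of_nonneg hpq'
      (ae_of_all _ fun s => abs_nonneg (f' s)) (ae_of_all _ fun s => abs_nonneg _) hfa hg
    have hker_q : (∫ s in a..b, |x - s| ^ q) = ((x-a)^(q+1) + (b-x)^(q+1))/(q+1) := by
      have c1 : Continuous fun s : ℝ => |x - s| ^ q :=
        Continuous.rpow_const (by fun_prop) (fun s => Or.inr hq0.le)
      rw [← intervalIntegral.integral_add_adjacent_intervals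
        (c1.intervalIntegrable a x) (c1.intervalIntegrable x b)]
      have e1 : (∫ s in a..x, |x - s| ^ q) = ∫ s in a..x, (fun u => u ^ q) (x - s) := by
        refine intervalIntegral.integral_congr fun s hs => ?_
        rw [Set.uIcc_of_le hax] at hs
        simp only
        rw [abs_of_nonneg (by linarith [hs.2])]
      have e2 : (∫ s in x..b, |x - s| ^ q) = ∫ s in x..b, (fun u => u ^ q) (s - x) := by
        refine intervalIntegral.integral_congr fun s hs => ?_
        rw [Set.uIcc_of_le hxb] at hs
        simp only
        rw [abs_sub_comm, abs_of_nonneg (by linarith [hs.1])]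
      rw [e1, e2, intervalIntegral.integral_comp_sub_left (fun u => u ^ q) x,
        intervalIntegral.integral_comp_sub_right (fun u => u ^ q) x]
      simp only [sub_self]
      rw [integral_rpow (Or.inl (by linarith : (-1:ℝ) < q)),
        integral_rpow (Or.inl (by linarith : (-1:ℝ) < q)),
        Real.zero_rpow (by linarith : q + 1 ≠ 0)]
      ring
    have hA : (0:ℝ) ≤ (x-a)^(q+1) + (b-x)^(q+1) :=
      add_nonneg (Real.rpow_nonneg (by linarith) _) (Real.rpow_nonneg (by linarith) _)
    have hfactor : ((∫ s in a..b, |x - s| ^ q) : ℝ) ^ (1/q)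
        = (1 / (q + 1) ^ (1/q)) * ((x-a)^(q+1) + (b-x)^(q+1)) ^ (1/q) := by
      rw [hker_q, Real.div_rpow hA (by linarith : (0:ℝ) ≤ q + 1)]
      rw [div_eq_mul_inv, mul_comm, ← one_div]
    have hmain : (∫ s in a..b, |x - s| * |f' s|)
        ≤ (∫ s in a..b, |f' s| ^ p) ^ (1/p) * (∫ s in a..b, |x - s| ^ q) ^ (1/q) := by
      rw [hconv (fun s => |x - s| * |f' s|), hconv (fun s => |f' s| ^ p),
        hconv (fun s => |x - s| ^ q)]
      simp_rw [mul_comm (|x - _|) (|f' _|)]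
      exact hold
    calc |(∫ t in a..b, f t) - ((x - a) * f a + (b - x) * f b)|
        ≤ ∫ s in a..b, |x - s| * |f' s| := habs
      _ ≤ (∫ s in a..b, |f' s| ^ p) ^ (1/p) * (∫ s in a..b, |x - s| ^ q) ^ (1/q) := hmain
      _ = (1 / (q + 1) ^ (1/q)) * ((x-a)^(q+1) + (b-x)^(q+1)) ^ (1/q) *
            (∫ s in a..b, |f' s| ^ p) ^ (1/p) := by rw [hfactor]; ring
  · -- L1 bound
    have hC : ∀ s ∈ Set.Icc a b, |x - s| ≤ (1/2)*(b-a) + |x-(a+b)/2| := by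
      intro s hs
      rcases abs_cases (x - s) with ⟨e1, l1⟩ | ⟨e1, l1⟩ <;>
        rcases abs_cases (x - (a+b)/2) with ⟨e3, l3⟩ | ⟨e3, l3⟩ <;>
        rw [e1, e3] <;> linarith [hs.1, hs.2]
    have h1 : (∫ s in a..b, |x - s| * |f' s|)
        ≤ ((1/2)*(b-a) + |x-(a+b)/2|) * ∫ s in a..b, |f' s| := by
      rw [hconv (fun s => |x - s| * |f' s|), hconv (fun s => |f' s|),
        ← MeasureTheory.integral_const_mul]
      refine integral_mono_ae hkerIcc (hf'Icc.const_mul _) ?_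
      filter_upwards [ae_restrict_mem measurableSet_Icc] with s hs
      exact mul_le_mul_of_nonneg_right (hC s hs) (abs_nonneg _)
    exact habs.trans h1
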